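/- Let H be a symmetric positive semidefinite block matrix H = [[E, Ĉ],[Ĉ^T, P̂]] with E symmetric positive definite, and suppose ker H = {0} × ker P̂. Then the Schur complement S = E − Ĉ P̂⁺ Ĉ^T, where P̂⁺ is the Moore–Penrose pseudoinverse of P̂, is symmetric positive definite. -/

import Mathlib

open Matrix

/-- Uniqueness of the Moore-Penrose pseudoinverse. -/
lemma mp_unique {m : ℕ} (P X Y : Matrix (Fin m) (Fin m) ℝ)
    (hX1 : P * X * P = P) (hX2 : X * P * X = X)
    (hX3 : (P * X)ᵀ = P * X) (hX4 : (X * P)ᵀ = X * P)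
    (hY1 : P * Y * P = P) (hY2 : Y * P * Y = Y)
    (hY3 : (P * Y)ᵀ = P * Y) (hY4 : (Y * P)ᵀ = Y * P) : X = Y := by
  have hPX : P * X = P * Y := by
    calc P * X = (P * X)ᵀ := hX3.symm
    _ = ((P * Y * P) * X)ᵀ := by rw [hY1]
    _ = (P * X)ᵀ * (P * Y)ᵀ := by simp only [transpose_mul, Matrix.mul_assoc]
    _ = (P * X) * (P * Y) := by rw [hX3, hY3]
    _ = (P * X * P) * Y := by simp only [Matrix.mul_assoc]
    _ = P * Y := by rw [hX1]
  have hXP : X * P = Y * P := by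
    calc X * P = (X * P)ᵀ := hX4.symm
    _ = (X * (P * Y * P))ᵀ := by rw [hY1]
    _ = (Y * P)ᵀ * (X * P)ᵀ := by simp only [transpose_mul, Matrix.mul_assoc]
    _ = (Y * P) * (X * P) := by rw [hX4, hY4]
    _ = Y * (P * X * P) := by simp only [Matrix.mul_assoc]
    _ = Y * P := by rw [hX1]
  calc X = X * P * X := hX2.symm
  _ = Y * P * X := by rw [hXP]
  _ = Y * (P * X) := Matrix.mul_assoc _ _ _
  _ = Y * (P * Y) := by rw [hPX]
  _ = Y * P * Y := (Matrix.mul_assoc _ _ _).symm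
  _ = Y := hY2

/-- Let `H = [[E, Ĉ],[Ĉᵀ, P̂]]` be symmetric positive semidefinite with
`E` symmetric positive definite and `ker H = {0} × ker P̂`.  Then the Schur complement
`S = E − Ĉ P̂⁺ Ĉᵀ` (with `P̂⁺` the Moore–Penrose pseudoinverse of `P̂`, characterized by
the four Penrose conditions) is symmetric positive definite. -/
theorem schur_complement_posDef {n m : ℕ}
    (E : Matrix (Fin n) (Fin n) ℝ) (C : Matrix (Fin n) (Fin m) ℝ)
    (P : Matrix (Fin m) (Fin m) ℝ)
    (hH : (Matrix.fromBlocks E C Cᵀ P).PosSemidef)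
    (hE : E.PosDef)
    (Pplus : Matrix (Fin m) (Fin m) ℝ)
    (hP1 : P * Pplus * P = P) (hP2 : Pplus * P * Pplus = Pplus)
    (hP3 : (P * Pplus)ᵀ = P * Pplus) (hP4 : (Pplus * P)ᵀ = Pplus * P)
    (hker : ∀ (u : Fin n → ℝ) (p : Fin m → ℝ),
        (Matrix.fromBlocks E C Cᵀ P) *ᵥ Sum.elim u p = 0 ↔ (u = 0 ∧ P *ᵥ p = 0)) :
    (E - C * Pplus * Cᵀ).PosDef := by
  -- P is symmetric
  have hPsym : Pᵀ = P := by
    have h := hH.1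
    ext i j
    have := congrFun (congrFun h (Sum.inr i)) (Sum.inr j)
    simpa [conjTranspose_apply, fromBlocks] using this
  -- Pplus is symmetric
  have hPplusSym : Pplusᵀ = Pplus := by
    refine (mp_unique P Pplus Pplusᵀ hP1 hP2 hP3 hP4 ?_ ?_ ?_ ?_).symm
    · have h := congrArg transpose hP1
      simpa [transpose_mul, hPsym, Matrix.mul_assoc] using h
    · have h := congrArg transpose hP2
      simpa [transpose_mul, hPsym, Matrix.mul_assoc] using h
    · have h1 : P * Pplusᵀ = Pplus * P := by
        calc P * Pplusᵀ = Pᵀᵀ * Pplusᵀ := by rw [transpose_transpose]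
        _ = (Pplus * Pᵀ)ᵀ := by rw [transpose_mul]
        _ = (Pplus * P)ᵀ := by rw [hPsym]
        _ = Pplus * P := hP4
      rw [h1]; exact hP4
    · have h2 : Pplusᵀ * P = P * Pplus := by
        calc Pplusᵀ * P = Pplusᵀ * Pᵀᵀ := by rw [transpose_transpose]
        _ = (Pᵀ * Pplus)ᵀ := by rw [transpose_mul]
        _ = (P * Pplus)ᵀ := by rw [hPsym]
        _ = P * Pplus := hP3
      rw [h2]; exact hP3
  -- ker P ⊆ ker C, pointwise
  have hkerC : ∀ q : Fin m → ℝ, P *ᵥ q = 0 → C *ᵥ q = 0 := by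
    intro q hq
    have h := (hker 0 q).2 ⟨rfl, hq⟩
    funext i
    have := congrFun h (Sum.inl i)
    simpa [fromBlocks_mulVec] using this
  -- C = C * Pplus * P
  have hCPP : C * Pplus * P = C := by
    have key : ∀ j : Fin m, ∀ i : Fin n, (C * Pplus * P) i j = C i j := by
      intro j i
      have hq : P *ᵥ ((Pplus * P) *ᵥ Pi.single j 1 - Pi.single j 1) = 0 := by
        rw [mulVec_sub, mulVec_mulVec, ← Matrix.mul_assoc, hP1, sub_self]
      have hc := hkerC _ hq
      rw [mulVec_sub, sub_eq_zero, mulVec_mulVec, ← Matrix.mul_assoc] at hc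
      have := congrFun hc i
      simpa using this
    ext i j
    exact key j i
  -- P * Pplus * Cᵀ = Cᵀ
  have hPPC : P * Pplus * Cᵀ = Cᵀ := by
    have h := congrArg transpose hCPP
    simpa [transpose_mul, hPsym, hPplusSym, Matrix.mul_assoc] using h
  rw [posDef_iff_dotProduct_mulVec]
  constructor
  · -- Hermitian
    show (E - C * Pplus * Cᵀ)ᴴ = E - C * Pplus * Cᵀ
    rw [conjTranspose_eq_transpose_of_trivial, transpose_sub]
    congr 1
    · rw [← conjTranspose_eq_transpose_of_trivial]; exact hE.1
    · rw [transpose_mul, transpose_mul, transpose_transpose, hPplusSym, Matrix.mul_assoc]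
  · intro x hx
    set p : Fin m → ℝ := -(Pplus *ᵥ (Cᵀ *ᵥ x)) with hp
    have htop : E *ᵥ x + C *ᵥ p = (E - C * Pplus * Cᵀ) *ᵥ x := by
      rw [hp, mulVec_neg, mulVec_mulVec, mulVec_mulVec, sub_mulVec]
      abel
    have hbot : Cᵀ *ᵥ x + P *ᵥ p = 0 := by
      rw [hp, mulVec_neg, mulVec_mulVec, mulVec_mulVec, hPPC]
      simp
    have hHv : (Matrix.fromBlocks E C Cᵀ P) *ᵥ Sum.elim x p
        = Sum.elim ((E - C * Pplus * Cᵀ) *ᵥ x) 0 := by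
      rw [fromBlocks_mulVec, Sum.elim_comp_inl, Sum.elim_comp_inr, htop, hbot]
    have hquad : Sum.elim x p ⬝ᵥ ((Matrix.fromBlocks E C Cᵀ P) *ᵥ Sum.elim x p)
        = x ⬝ᵥ ((E - C * Pplus * Cᵀ) *ᵥ x) := by
      rw [hHv]
      simp [dotProduct, Fintype.sum_sum_type]
    have hge : 0 ≤ x ⬝ᵥ ((E - C * Pplus * Cᵀ) *ᵥ x) := by
      rw [← hquad]
      have := hH.dotProduct_mulVec_nonneg (Sum.elim x p)
      simpa using this
    rcases lt_or_eq_of_le hge with h | h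
    · simpa using h
    · exfalso
      have hz : star (Sum.elim x p) ⬝ᵥ ((Matrix.fromBlocks E C Cᵀ P) *ᵥ Sum.elim x p) = 0 := by
        simpa [hquad] using h.symm
      have hv0 : (Matrix.fromBlocks E C Cᵀ P) *ᵥ Sum.elim x p = 0 :=
        (hH.dotProduct_mulVec_zero_iff (Sum.elim x p)).1 hz
      exact hx ((hker x p).1 hv0).1
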